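/- arXiv:2503.05922 — 2 statements merged into one kernel-verified Lean document; each statement's English description precedes it below -/
import Mathlib

section
/- Let q, s ∈ [1,∞] with q < s, and A = (α₀, α_∞), B = (β₀, β_∞) ∈ ℝ² be such that (∞,q,A) and (∞,s,B) are admissible Lorentz–Zygmund parameters and α_∞ + 1/q = β_∞ + 1/s = 0. Then lim_{a→∞} sup{ ‖f^* χ_{(a,∞)}‖_{L^{∞,s,B}(0,∞)} : f measurable on (0,∞), ‖f‖_{L^{∞,q,A}(0,∞)} ≤ 1 } = 0. -/
open MeasureTheory Set Filter Topology
open scoped ENNReal NNReal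

noncomputable section

/-- The nonincreasing rearrangement of an `ℝ≥0∞`-valued function with respect to `μ`:
`f^*(t) = inf {λ : μ({f > λ}) ≤ t}`. -/
def rearr {α : Type*} [MeasurableSpace α] (μ : Measure α) (f : α → ℝ≥0∞) (t : ℝ) : ℝ≥0∞ :=
  sInf {l : ℝ≥0∞ | μ {x | l < f x} ≤ ENNReal.ofReal t}

/-- Lebesgue measure on `(0,∞)`. -/
def μI : Measure ℝ := volume.restrict (Set.Ioi (0 : ℝ))

/-- `ℓ(t) = 1 + |log t|`. -/
def ell (t : ℝ) : ℝ := 1 + |Real.log t|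

/-- The broken-logarithm power `ℓ^A(t)`, equal to `ℓ(t)^{α₀}` for `t ≤ 1` and to
`ℓ(t)^{α_∞}` for `t > 1`, where `A = (α₀, α_∞)`. -/
def ellA (A : ℝ × ℝ) (t : ℝ) : ℝ := if t ≤ 1 then ell t ^ A.1 else ell t ^ A.2

/-- The `L^q(0,∞)` norm (with `q ∈ [1,∞]`) of a nonnegative function. -/
def lqNorm (q : ℝ≥0∞) (g : ℝ → ℝ≥0∞) : ℝ≥0∞ :=
  if q = ∞ then essSup g μI
  else (∫⁻ t in Set.Ioi (0 : ℝ), g t ^ q.toReal) ^ q.toReal⁻¹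

/-- The Lorentz–Zygmund functional
`‖f‖_{L^{p,q,A}(0,∞)} = ‖ t^{1/p - 1/q} ℓ^A(t) f^*(t) ‖_{L^q(0,∞)}`
(with the conventions `1/∞ = 0`). -/
def lzNorm (p q : ℝ≥0∞) (A : ℝ × ℝ) (f : ℝ → ℝ≥0∞) : ℝ≥0∞ :=
  lqNorm q fun t => ENNReal.ofReal (t ^ (p.toReal⁻¹ - q.toReal⁻¹) * ellA A t) * rearr μI f t

/-- Admissibility of Lorentz–Zygmund parameters: the functional `‖·‖_{L^{p,q,A}}` is
equivalent to a rearrangement-invariant norm. -/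
def LZAdmissible (p q : ℝ≥0∞) (A : ℝ × ℝ) : Prop :=
  (p = 1 ∧ q = 1 ∧ 0 ≤ A.1 ∧ A.2 ≤ 0) ∨
  (1 < p ∧ p < ∞ ∧ 1 ≤ q) ∨
  (p = ∞ ∧ 1 ≤ q ∧ q < ∞ ∧ A.1 + q.toReal⁻¹ < 0) ∨
  (p = ∞ ∧ q = ∞ ∧ A.1 ≤ 0)

lemma rearr_antitone (f : ℝ → ℝ≥0∞) : Antitone (rearr μI f) := by
  intro t₁ t₂ h
  exact sInf_le_sInf fun l hl => le_trans hl (ENNReal.ofReal_le_ofReal h)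

lemma rearr_indicator_le (f : ℝ → ℝ≥0∞) (a t : ℝ) :
    rearr μI ((Set.Ioi a).indicator fun u => rearr μI f u) t ≤ rearr μI f (a + t) := by
  apply sInf_le
  have hsub : {x : ℝ | rearr μI f (a + t) < (Set.Ioi a).indicator (fun u => rearr μI f u) x}
      ⊆ Set.Ioo a (a + t) := by
    intro x hx
    simp only [Set.mem_setOf_eq] at hx
    by_cases hxa : x ∈ Set.Ioi a
    · rw [Set.indicator_of_mem hxa] at hx
      refine ⟨hxa, ?_⟩
      by_contra hge
      push_neg at hge
      exact absurd (rearr_antitone f hge) (not_le.mpr hx)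
    · rw [Set.indicator_of_notMem hxa] at hx
      exact absurd hx (by simp)
  calc μI {x : ℝ | rearr μI f (a + t) < (Set.Ioi a).indicator (fun u => rearr μI f u) x}
      ≤ μI (Set.Ioo a (a + t)) := measure_mono hsub
    _ ≤ volume (Set.Ioo a (a + t)) := Measure.restrict_le_self _
    _ = ENNReal.ofReal (a + t - a) := by rw [Real.volume_Ioo]
    _ = ENNReal.ofReal t := by ring_nf

lemma weight_lintegral {x y : ℝ} (hx : 1 ≤ x) (hxy : x ≤ y) :
    ∫⁻ t in Set.Ioc x y, ENNReal.ofReal (t⁻¹ * (1 + Real.log t)⁻¹) =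
      ENNReal.ofReal (Real.log (1 + Real.log y) - Real.log (1 + Real.log x)) := by
  have hpos : ∀ t ∈ Set.Icc x y, 0 < t := fun t ht => lt_of_lt_of_le zero_lt_one (hx.trans ht.1)
  have hlpos : ∀ t ∈ Set.Icc x y, 0 < 1 + Real.log t := by
    intro t ht
    have : 0 ≤ Real.log t := Real.log_nonneg (hx.trans ht.1)
    linarith
  have hderiv : ∀ t ∈ Set.Icc x y,
      HasDerivAt (fun u => Real.log (1 + Real.log u)) (t⁻¹ * (1 + Real.log t)⁻¹) t := by
    intro t ht
    have h1 : HasDerivAt (fun u => 1 + Real.log u) t⁻¹ t :=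
      (Real.hasDerivAt_log (hpos t ht).ne').const_add 1
    have h2 := (Real.hasDerivAt_log (hlpos t ht).ne').comp t h1
    rw [mul_comm]; exact h2
  have hcont : ContinuousOn (fun t : ℝ => t⁻¹ * (1 + Real.log t)⁻¹) (Set.Icc x y) := by
    apply ContinuousOn.mul
    · exact continuousOn_inv₀.mono (fun t ht => (hpos t ht).ne')
    · exact ContinuousOn.inv₀ (by fun_prop (disch := intro t ht; exact (hpos t ht).ne'))
        (fun t ht => (hlpos t ht).ne')
  have hInt : IntervalIntegrable (fun t : ℝ => t⁻¹ * (1 + Real.log t)⁻¹) volume x y := by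
    apply ContinuousOn.intervalIntegrable
    rwa [Set.uIcc_of_le hxy]
  have hFTC := intervalIntegral.integral_eq_sub_of_hasDerivAt
    (fun t ht => hderiv t (by rwa [Set.uIcc_of_le hxy] at ht)) hInt
  have hIoc : ∫ t in Set.Ioc x y, t⁻¹ * (1 + Real.log t)⁻¹ =
      Real.log (1 + Real.log y) - Real.log (1 + Real.log x) := by
    rw [← intervalIntegral.integral_of_le hxy]; exact hFTC
  rw [← MeasureTheory.ofReal_integral_eq_lintegral_ofReal, hIoc]
  · exact hInt.1
  · filter_upwards [MeasureTheory.self_mem_ae_restrict measurableSet_Ioc] with t ht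
    have h1 : 0 < t := lt_of_lt_of_le zero_lt_one (hx.trans ht.1.le)
    have h2 : 0 < 1 + Real.log t := hlpos t ⟨ht.1.le, ht.2⟩
    positivity

lemma c0_meas (c : ℝ) : Measurable (fun t : ℝ => ENNReal.ofReal (t⁻¹ * (1 - Real.log t) ^ c)) := by
  apply ENNReal.measurable_ofReal.comp
  exact (measurable_inv.mul ((Real.measurable_log.const_sub 1).pow_const c))

lemma c0_ftc {c : ℝ} (hc : c < -1) {ε : ℝ} (hε : 0 < ε) (hε1 : ε ≤ 1) :
    ∫⁻ t in Set.Ioc ε 1, ENNReal.ofReal (t⁻¹ * (1 - Real.log t) ^ c) ≤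
      ENNReal.ofReal (-(c + 1))⁻¹ := by
  have hpos : ∀ t ∈ Set.Icc ε 1, 0 < t := fun t ht => lt_of_lt_of_le hε ht.1
  have hlpos : ∀ t ∈ Set.Icc ε 1, 0 < 1 - Real.log t := by
    intro t ht
    have : Real.log t ≤ 0 := Real.log_nonpos (hpos t ht).le ht.2
    linarith
  set H : ℝ → ℝ := fun t => -((1 - Real.log t) ^ (c + 1) / (c + 1)) with hH
  have hderiv : ∀ t ∈ Set.Icc ε 1, HasDerivAt H (t⁻¹ * (1 - Real.log t) ^ c) t := by
    intro t ht
    have h1 : HasDerivAt (fun u : ℝ => 1 - Real.log u) (-t⁻¹) t :=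
      (Real.hasDerivAt_log (hpos t ht).ne').const_sub 1
    have h2 : HasDerivAt (fun u : ℝ => u ^ (c + 1)) ((c + 1) * (1 - Real.log t) ^ (c + 1 - 1))
        (1 - Real.log t) := Real.hasDerivAt_rpow_const (Or.inl (hlpos t ht).ne')
    have h3 := (h2.comp t h1).div_const (c + 1)
    have h4 := h3.neg
    have hc1 : c + 1 ≠ 0 := by linarith
    have ht0 : t ≠ 0 := (hpos t ht).ne'
    convert h4 using 1
    · rfl
    · rfl
    · rfl
    rw [show c + 1 - 1 = c by ring]
    field_simp
  have hcont : ContinuousOn (fun t : ℝ => t⁻¹ * (1 - Real.log t) ^ c) (Set.Icc ε 1) := by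
    apply ContinuousOn.mul
    · exact continuousOn_inv₀.mono (fun t ht => (hpos t ht).ne')
    · apply ContinuousOn.rpow_const
      · exact continuousOn_const.sub (Real.continuousOn_log.mono (fun t ht => (hpos t ht).ne'))
      · exact fun t ht => Or.inl (hlpos t ht).ne'
  have hInt : IntervalIntegrable (fun t : ℝ => t⁻¹ * (1 - Real.log t) ^ c) volume ε 1 := by
    apply ContinuousOn.intervalIntegrable
    rwa [Set.uIcc_of_le hε1]
  have hFTC := intervalIntegral.integral_eq_sub_of_hasDerivAt
    (fun t ht => hderiv t (by rwa [Set.uIcc_of_le hε1] at ht)) hInt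
  have hIoc : ∫ t in Set.Ioc ε 1, t⁻¹ * (1 - Real.log t) ^ c = H 1 - H ε := by
    rw [← intervalIntegral.integral_of_le hε1]; exact hFTC
  have hnn : 0 ≤ᵐ[volume.restrict (Set.Ioc ε 1)] fun t : ℝ => t⁻¹ * (1 - Real.log t) ^ c := by
    filter_upwards [MeasureTheory.self_mem_ae_restrict measurableSet_Ioc] with t ht
    have h1 : 0 < t := hε.trans ht.1
    have h2 : 0 < 1 - Real.log t := hlpos t ⟨ht.1.le, ht.2⟩
    positivity
  rw [← MeasureTheory.ofReal_integral_eq_lintegral_ofReal hInt.1 hnn, hIoc]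
  apply ENNReal.ofReal_le_ofReal
  have hc1 : c + 1 < 0 := by linarith
  have hb : (0:ℝ) ≤ (1 - Real.log ε) ^ (c + 1) := by
    apply Real.rpow_nonneg
    have : Real.log ε ≤ 0 := Real.log_nonpos hε.le hε1
    linarith
  have h1 : H 1 = -(1 / (c + 1)) := by simp [hH]
  rw [h1, hH]
  have : -(1 / (c + 1)) - -((1 - Real.log ε) ^ (c + 1) / (c + 1)) =
      (1 - (1 - Real.log ε) ^ (c + 1)) / (-(c + 1)) := by
    rw [div_neg]
    ring
  rw [this, inv_eq_one_div]
  have hd : (0:ℝ) < -(c+1) := by linarith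
  gcongr
  linarith

lemma c0_bound {c : ℝ} (hc : c < -1) :
    ∫⁻ t in Set.Ioc (0:ℝ) 1, ENNReal.ofReal (t⁻¹ * (1 - Real.log t) ^ c) ≤
      ENNReal.ofReal (-(c + 1))⁻¹ := by
  set h : ℝ → ℝ≥0∞ := fun t => ENNReal.ofReal (t⁻¹ * (1 - Real.log t) ^ c) with hh
  set F : ℕ → ℝ → ℝ≥0∞ := fun n => (Set.Ioc ((n:ℝ)+1)⁻¹ 1).indicator h with hF
  have hmeas : ∀ n, Measurable (F n) := fun n => (c0_meas c).indicator measurableSet_Ioc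
  have hmono : Monotone F := by
    intro n m hnm
    apply Set.indicator_le_indicator_of_subset
    · apply Set.Ioc_subset_Ioc_left
      apply inv_anti₀ (by positivity)
      have : (n:ℝ) ≤ m := Nat.cast_le.mpr hnm
      linarith
    · exact fun t => zero_le
  have hsup : ∀ t, (⨆ n, F n t) = (Set.Ioc (0:ℝ) 1).indicator h t := by
    intro t
    by_cases ht : t ∈ Set.Ioc (0:ℝ) 1
    · rw [Set.indicator_of_mem ht]
      apply le_antisymm
      · exact iSup_le fun n => Set.indicator_le_self _ _ t
      · obtain ⟨n, hn⟩ := exists_nat_one_div_lt ht.1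
        have htm : t ∈ Set.Ioc ((n:ℝ)+1)⁻¹ 1 := ⟨by rw [← one_div]; exact hn, ht.2⟩
        exact le_iSup_of_le n (by rw [hF]; simp [Set.indicator_of_mem htm])
    · rw [Set.indicator_of_notMem ht]
      apply le_antisymm _ (zero_le)
      apply iSup_le fun n => ?_
      have : t ∉ Set.Ioc ((n:ℝ)+1)⁻¹ 1 := by
        intro hmem
        exact ht ⟨lt_trans (by positivity) hmem.1, hmem.2⟩
      simp [hF, Set.indicator_of_notMem this]
  calc ∫⁻ t in Set.Ioc (0:ℝ) 1, h t = ∫⁻ t, (Set.Ioc (0:ℝ) 1).indicator h t := by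
        rw [lintegral_indicator measurableSet_Ioc]
    _ = ∫⁻ t, ⨆ n, F n t := by simp_rw [hsup]
    _ = ⨆ n, ∫⁻ t, F n t := lintegral_iSup hmeas hmono
    _ ≤ ENNReal.ofReal (-(c + 1))⁻¹ := by
        apply iSup_le fun n => ?_
        rw [hF]
        simp only
        rw [lintegral_indicator measurableSet_Ioc]
        exact c0_ftc hc (by positivity) (by
          rw [inv_le_one_iff₀]
          right; linarith [Nat.cast_nonneg (α := ℝ) n])

lemma weight_meas : Measurable (fun t : ℝ => ENNReal.ofReal (t⁻¹ * (1 + Real.log t)⁻¹)) := by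
  apply ENNReal.measurable_ofReal.comp
  exact measurable_inv.mul (Real.measurable_log.const_add 1).inv

lemma ellA_gt_one {A : ℝ × ℝ} {t : ℝ} (ht : 1 < t) : ellA A t = (1 + Real.log t) ^ A.2 := by
  rw [ellA, if_neg (not_le.mpr ht), ell, abs_of_nonneg (Real.log_nonneg ht.le)]

lemma weight_pow {r : ℝ} (hr : 0 < r) {A : ℝ × ℝ} (hA2 : A.2 = -r⁻¹) {t : ℝ} (ht : 1 < t)
    (x : ℝ≥0∞) :
    (ENNReal.ofReal (t ^ (-r⁻¹) * ellA A t) * x) ^ r =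
      ENNReal.ofReal (t⁻¹ * (1 + Real.log t)⁻¹) * x ^ r := by
  have ht0 : (0:ℝ) < t := lt_trans zero_lt_one ht
  have hl0 : (0:ℝ) < 1 + Real.log t := by
    have := Real.log_nonneg ht.le; linarith
  have hw0 : 0 ≤ t ^ (-r⁻¹) * (1 + Real.log t) ^ (-r⁻¹) := by positivity
  rw [ellA_gt_one ht, hA2]
  rw [ENNReal.mul_rpow_of_nonneg _ _ hr.le,
    ENNReal.ofReal_rpow_of_nonneg hw0 hr.le]
  congr 2
  rw [Real.mul_rpow (Real.rpow_nonneg ht0.le _) (Real.rpow_nonneg hl0.le _),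
    ← Real.rpow_mul ht0.le, ← Real.rpow_mul hl0.le]
  have : -r⁻¹ * r = -1 := by field_simp
  rw [this, Real.rpow_neg_one, Real.rpow_neg_one]

lemma norm_integral_le {q : ℝ≥0∞} (hr : 0 < q.toReal) (hqt : q ≠ ∞) {A : ℝ × ℝ}
    {f : ℝ → ℝ≥0∞} (hf : lzNorm ∞ q A f ≤ 1) :
    ∫⁻ t in Set.Ioi (0:ℝ),
      (ENNReal.ofReal (t ^ (-q.toReal⁻¹) * ellA A t) * rearr μI f t) ^ q.toReal ≤ 1 := by
  rw [lzNorm, lqNorm, if_neg hqt] at hf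
  simp only [ENNReal.toReal_top, inv_zero, zero_sub] at hf
  have h2 := ENNReal.rpow_le_rpow hf hr.le
  rwa [← ENNReal.rpow_mul, inv_mul_cancel₀ hr.ne', ENNReal.rpow_one, ENNReal.one_rpow] at h2

lemma key_bound {q : ℝ≥0∞} (hr : 0 < q.toReal) (hqt : q ≠ ∞) {A : ℝ × ℝ}
    (hA2 : A.2 = -q.toReal⁻¹) {f : ℝ → ℝ≥0∞} (hf : lzNorm ∞ q A f ≤ 1) {τ : ℝ} (hτ : 1 < τ) :
    rearr μI f τ ^ q.toReal * ENNReal.ofReal (Real.log (1 + Real.log τ)) ≤ 1 := by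
  set r := q.toReal
  have h1 := norm_integral_le hr hqt hf
  have h2 : ENNReal.ofReal (Real.log (1 + Real.log τ)) =
      ∫⁻ t in Set.Ioc (1:ℝ) τ, ENNReal.ofReal (t⁻¹ * (1 + Real.log t)⁻¹) := by
    rw [weight_lintegral le_rfl hτ.le]
    norm_num
  calc rearr μI f τ ^ r * ENNReal.ofReal (Real.log (1 + Real.log τ))
      = ∫⁻ t in Set.Ioc (1:ℝ) τ, rearr μI f τ ^ r *
          ENNReal.ofReal (t⁻¹ * (1 + Real.log t)⁻¹) := by
        rw [h2, lintegral_const_mul _ weight_meas]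
    _ ≤ ∫⁻ t in Set.Ioc (1:ℝ) τ,
          (ENNReal.ofReal (t ^ (-r⁻¹) * ellA A t) * rearr μI f t) ^ r := by
        apply lintegral_mono_ae
        filter_upwards [MeasureTheory.self_mem_ae_restrict measurableSet_Ioc] with t ht
        rw [weight_pow hr hA2 ht.1]
        rw [mul_comm]
        exact mul_le_mul_right (ENNReal.rpow_le_rpow (rearr_antitone f ht.2) hr.le) _
    _ ≤ ∫⁻ t in Set.Ioi (0:ℝ),
          (ENNReal.ofReal (t ^ (-r⁻¹) * ellA A t) * rearr μI f t) ^ r :=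
        lintegral_mono_set (fun t ht => lt_trans zero_lt_one ht.1)
    _ ≤ 1 := h1

lemma pow_weight {σ : ℝ} (hσ : 0 < σ) {t w : ℝ} (ht : 0 < t) (hw : 0 ≤ w) (x : ℝ≥0∞) :
    (ENNReal.ofReal (t ^ (-σ⁻¹) * w) * x) ^ σ = ENNReal.ofReal (t⁻¹ * w ^ σ) * x ^ σ := by
  have hw0 : 0 ≤ t ^ (-σ⁻¹) * w := by positivity
  rw [ENNReal.mul_rpow_of_nonneg _ _ hσ.le, ENNReal.ofReal_rpow_of_nonneg hw0 hσ.le]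
  congr 2
  rw [Real.mul_rpow (Real.rpow_nonneg ht.le _) hw, ← Real.rpow_mul ht.le]
  have : -σ⁻¹ * σ = -1 := by field_simp
  rw [this, Real.rpow_neg_one]

lemma ellA_le_one {A : ℝ × ℝ} {t : ℝ} (ht0 : 0 < t) (ht : t ≤ 1) :
    ellA A t = (1 - Real.log t) ^ A.1 := by
  rw [ellA, if_pos ht, ell, abs_of_nonpos (Real.log_nonpos ht0.le ht)]; ring_nf

lemma real4 {a t : ℝ} (ha : 1 ≤ a) (hta : a < t) :
    t⁻¹ * (1 + Real.log t)⁻¹ ≤ 4 * ((a + t)⁻¹ * (1 + Real.log (a + t))⁻¹) := by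
  have ht1 : 1 < t := lt_of_le_of_lt ha hta
  have ht0 : 0 < t := lt_trans zero_lt_one ht1
  have hlt : 0 ≤ Real.log t := Real.log_nonneg ht1.le
  have hat0 : 0 < a + t := by linarith
  have h1 : t⁻¹ ≤ 2 * (a + t)⁻¹ := by
    rw [show 2 * (a + t)⁻¹ = ((a + t) / 2)⁻¹ by field_simp]
    apply inv_anti₀ (by linarith) (by linarith)
  have hlog : Real.log (a + t) ≤ 1 + 2 * Real.log t := by
    have h2 : a + t ≤ 2 * t := by linarith
    have := Real.log_le_log hat0 h2
    rw [Real.log_mul (by norm_num) ht0.ne'] at this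
    have hl2 : Real.log 2 ≤ 1 := by
      have := Real.log_two_lt_d9; linarith
    linarith
  have hlat : 0 ≤ Real.log (a + t) := Real.log_nonneg (by linarith)
  have h3 : (1 + Real.log t)⁻¹ ≤ 2 * (1 + Real.log (a + t))⁻¹ := by
    rw [show 2 * (1 + Real.log (a + t))⁻¹ = ((1 + Real.log (a + t)) / 2)⁻¹ by field_simp]
    apply inv_anti₀ (by linarith) (by linarith)
  calc t⁻¹ * (1 + Real.log t)⁻¹ ≤ (2 * (a + t)⁻¹) * (2 * (1 + Real.log (a + t))⁻¹) := by
        apply mul_le_mul h1 h3 (by positivity) (by positivity)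
    _ = 4 * ((a + t)⁻¹ * (1 + Real.log (a + t))⁻¹) := by ring

lemma tail_bound {q s : ℝ≥0∞} {A B : ℝ × ℝ}
    (hr : 0 < q.toReal) (hqt : q ≠ ∞) (hst : s ≠ ∞)
    (hrs : q.toReal < s.toReal)
    (hA2 : A.2 = -q.toReal⁻¹) (hB2 : B.2 = -s.toReal⁻¹) (hB1 : s.toReal * B.1 < -1)
    {f : ℝ → ℝ≥0∞} (hf : lzNorm ∞ q A f ≤ 1) {a : ℝ}
    (hLa : 1 ≤ Real.log (1 + Real.log a)) (ha : 16 ≤ a) :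
    lzNorm ∞ s B ((Set.Ioi a).indicator fun t => rearr μI f t) ≤
      ((ENNReal.ofReal (-(s.toReal * B.1 + 1))⁻¹ + 5) *
        ((ENNReal.ofReal (Real.log (1 + Real.log a)))⁻¹ ^
          ((s.toReal - q.toReal) / q.toReal))) ^ s.toReal⁻¹ := by
  set r := q.toReal with hrdef
  set σ := s.toReal with hσdef
  have hσ : 0 < σ := hr.trans hrs
  set F := rearr μI f with hF
  set g : ℝ → ℝ≥0∞ := (Set.Ioi a).indicator fun t => rearr μI f t with hg
  set G := rearr μI g with hG
  set ε := (ENNReal.ofReal (Real.log (1 + Real.log a)))⁻¹ with hε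
  set M := ENNReal.ofReal (-(σ * B.1 + 1))⁻¹ with hM
  set γ := (σ - r) / r with hγ
  have ha1 : (1:ℝ) ≤ a := by linarith
  have hagt1 : (1:ℝ) < a := by linarith
  have hLpos : 0 < Real.log (1 + Real.log a) := lt_of_lt_of_le zero_lt_one hLa
  have hofL0 : ENNReal.ofReal (Real.log (1 + Real.log a)) ≠ 0 :=
    (ENNReal.ofReal_pos.mpr hLpos).ne'
  have hofLT : ENNReal.ofReal (Real.log (1 + Real.log a)) ≠ ∞ := ENNReal.ofReal_ne_top
  have hε1 : ε ≤ 1 := by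
    rw [hε, ENNReal.inv_le_one]
    exact ENNReal.one_le_ofReal.mpr hLa
  have hγpos : 0 < γ := div_pos (by linarith) hr
  have hγ1 : σ / r = γ + 1 := by rw [hγ]; field_simp; ring
  have hFa : F a ^ r ≤ ε := ENNReal.le_inv_iff_mul_le.mpr (key_bound hr hqt hA2 hf hagt1)
  have hpow : ∀ (c : ℝ), 0 ≤ c → F a ^ (r * c) ≤ ε ^ c := by
    intro c hc
    rw [ENNReal.rpow_mul]
    exact ENNReal.rpow_le_rpow hFa hc
  have hFaσ : F a ^ σ ≤ ε ^ (σ / r) := by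
    have := hpow (σ / r) (div_nonneg hσ.le hr.le)
    rwa [show r * (σ / r) = σ by field_simp] at this
  have hFaγ : F a ^ (σ - r) ≤ ε ^ γ := by
    have := hpow γ hγpos.le
    rwa [show r * γ = σ - r by rw [hγ]; field_simp] at this
  have hGF : ∀ t : ℝ, G t ≤ F (a + t) := fun t => rearr_indicator_le f a t
  have hFmeas : Measurable F := (rearr_antitone f).measurable
  have hnorm : lzNorm ∞ s B g =
      (∫⁻ t in Set.Ioi (0:ℝ), (ENNReal.ofReal (t ^ (-σ⁻¹) * ellA B t) * G t) ^ σ) ^ σ⁻¹ := by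
    rw [lzNorm, lqNorm, if_neg hst]
    simp only [ENNReal.toReal_top, inv_zero, zero_sub]
    rfl
  have e1 : ∀ ψ : ℝ → ℝ≥0∞, ∫⁻ t in Set.Ioi (0:ℝ), ψ t =
      (∫⁻ t in Set.Ioc (0:ℝ) 1, ψ t) +
        ((∫⁻ t in Set.Ioc (1:ℝ) a, ψ t) + ∫⁻ t in Set.Ioi a, ψ t) := by
    intro ψ
    rw [← lintegral_union measurableSet_Ioi (Set.Ioc_disjoint_Ioi le_rfl),
      Set.Ioc_union_Ioi_eq_Ioi ha1,
      ← lintegral_union measurableSet_Ioi (Set.Ioc_disjoint_Ioi le_rfl),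
      Set.Ioc_union_Ioi_eq_Ioi zero_le_one]
  -- Bound 1
  have hb1 : ∫⁻ t in Set.Ioc (0:ℝ) 1, (ENNReal.ofReal (t ^ (-σ⁻¹) * ellA B t) * G t) ^ σ ≤
      ε ^ (σ / r) * M := by
    calc ∫⁻ t in Set.Ioc (0:ℝ) 1, (ENNReal.ofReal (t ^ (-σ⁻¹) * ellA B t) * G t) ^ σ
        ≤ ∫⁻ t in Set.Ioc (0:ℝ) 1,
            F a ^ σ * ENNReal.ofReal (t⁻¹ * (1 - Real.log t) ^ (σ * B.1)) := by
          apply lintegral_mono_ae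
          filter_upwards [MeasureTheory.self_mem_ae_restrict measurableSet_Ioc] with t ht
          have hlog0 : (0:ℝ) ≤ 1 - Real.log t := by
            linarith [Real.log_nonpos ht.1.le ht.2]
          rw [ellA_le_one ht.1 ht.2, pow_weight hσ ht.1 (Real.rpow_nonneg hlog0 _),
            ← Real.rpow_mul hlog0, mul_comm B.1 σ, mul_comm]
          apply mul_le_mul_left
          have : G t ≤ F a := (hGF t).trans (rearr_antitone f (by linarith [ht.1] : a ≤ a + t))
          exact ENNReal.rpow_le_rpow this hσ.le
      _ = F a ^ σ * ∫⁻ t in Set.Ioc (0:ℝ) 1,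
            ENNReal.ofReal (t⁻¹ * (1 - Real.log t) ^ (σ * B.1)) :=
          lintegral_const_mul _ (c0_meas _)
      _ ≤ ε ^ (σ / r) * M := mul_le_mul' hFaσ (c0_bound hB1)
  -- Bound 2
  have hb2 : ∫⁻ t in Set.Ioc (1:ℝ) a, (ENNReal.ofReal (t ^ (-σ⁻¹) * ellA B t) * G t) ^ σ ≤
      ε ^ γ := by
    calc ∫⁻ t in Set.Ioc (1:ℝ) a, (ENNReal.ofReal (t ^ (-σ⁻¹) * ellA B t) * G t) ^ σ
        ≤ ∫⁻ t in Set.Ioc (1:ℝ) a,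
            F a ^ σ * ENNReal.ofReal (t⁻¹ * (1 + Real.log t)⁻¹) := by
          apply lintegral_mono_ae
          filter_upwards [MeasureTheory.self_mem_ae_restrict measurableSet_Ioc] with t ht
          rw [weight_pow hσ hB2 ht.1, mul_comm]
          apply mul_le_mul_left
          have : G t ≤ F a :=
            (hGF t).trans (rearr_antitone f (by linarith [ht.1] : a ≤ a + t))
          exact ENNReal.rpow_le_rpow this hσ.le
      _ = F a ^ σ * ENNReal.ofReal (Real.log (1 + Real.log a)) := by
          rw [lintegral_const_mul _ weight_meas, weight_lintegral le_rfl ha1]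
          norm_num
      _ ≤ ε ^ (σ / r) * ENNReal.ofReal (Real.log (1 + Real.log a)) :=
          mul_le_mul_left hFaσ _
      _ = ε ^ γ * (ε * ENNReal.ofReal (Real.log (1 + Real.log a))) := by
          rw [hγ1, ENNReal.rpow_add_of_nonneg _ _ hγpos.le zero_le_one, ENNReal.rpow_one,
            mul_assoc]
      _ = ε ^ γ := by
          rw [hε, ENNReal.inv_mul_cancel hofL0 hofLT, mul_one]
  -- Bound 3
  have htrans : ∀ H : ℝ → ℝ≥0∞, ∫⁻ t in Set.Ioi a, H (a + t) = ∫⁻ u in Set.Ioi (a + a), H u := by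
    intro H
    have hpre : (fun t => a + t) ⁻¹' Set.Ioi (a + a) = Set.Ioi a := by
      ext t; simp [Set.mem_Ioi]
    rw [← hpre]
    exact (measurePreserving_add_left volume a).setLIntegral_comp_preimage_emb
      (measurableEmbedding_addLeft a) H _
  have hb3 : ∫⁻ t in Set.Ioi a, (ENNReal.ofReal (t ^ (-σ⁻¹) * ellA B t) * G t) ^ σ ≤
      ε ^ γ * 4 := by
    set H : ℝ → ℝ≥0∞ := fun u => ENNReal.ofReal (u⁻¹ * (1 + Real.log u)⁻¹) * F u ^ r with hH
    have hHmeas : Measurable H := weight_meas.mul (hFmeas.pow_const r)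
    have hHint : ∫⁻ u in Set.Ioi (a + a), H u ≤ 1 := by
      have heq : ∫⁻ u in Set.Ioi (a + a), H u =
          ∫⁻ u in Set.Ioi (a + a), (ENNReal.ofReal (u ^ (-r⁻¹) * ellA A u) * F u) ^ r := by
        apply setLIntegral_congr_fun measurableSet_Ioi
        intro u hu
        beta_reduce
        rw [weight_pow hr hA2 (by simp only [Set.mem_Ioi] at hu; linarith : 1 < u)]
      rw [heq]
      exact le_trans (lintegral_mono_set (fun u hu => by
        simp only [Set.mem_Ioi] at hu ⊢; linarith)) (norm_integral_le hr hqt hf)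
    calc ∫⁻ t in Set.Ioi a, (ENNReal.ofReal (t ^ (-σ⁻¹) * ellA B t) * G t) ^ σ
        ≤ ∫⁻ t in Set.Ioi a, ε ^ γ * (4 * H (a + t)) := by
          apply lintegral_mono_ae
          filter_upwards [MeasureTheory.self_mem_ae_restrict measurableSet_Ioi] with t ht
          simp only [Set.mem_Ioi] at ht
          have ht1 : 1 < t := lt_of_le_of_lt ha1 ht
          rw [weight_pow hσ hB2 ht1]
          have h5 : G t ^ σ ≤ F (a + t) ^ (σ - r) * F (a + t) ^ r := by
            rw [← ENNReal.rpow_add_of_nonneg _ _ (by linarith) hr.le,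
              show σ - r + r = σ by ring]
            exact ENNReal.rpow_le_rpow (hGF t) hσ.le
          have h6 : F (a + t) ^ (σ - r) ≤ ε ^ γ :=
            le_trans (ENNReal.rpow_le_rpow (rearr_antitone f (by linarith : a ≤ a + t))
              (by linarith)) hFaγ
          have h7 : ENNReal.ofReal (t⁻¹ * (1 + Real.log t)⁻¹) ≤
              4 * ENNReal.ofReal ((a + t)⁻¹ * (1 + Real.log (a + t))⁻¹) := by
            rw [show (4:ℝ≥0∞) = ENNReal.ofReal 4 by norm_num,
              ← ENNReal.ofReal_mul (by norm_num)]
            exact ENNReal.ofReal_le_ofReal (real4 ha1 ht)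
          calc ENNReal.ofReal (t⁻¹ * (1 + Real.log t)⁻¹) * G t ^ σ
              ≤ (4 * ENNReal.ofReal ((a + t)⁻¹ * (1 + Real.log (a + t))⁻¹)) *
                (F (a + t) ^ (σ - r) * F (a + t) ^ r) := mul_le_mul' h7 h5
            _ ≤ (4 * ENNReal.ofReal ((a + t)⁻¹ * (1 + Real.log (a + t))⁻¹)) *
                (ε ^ γ * F (a + t) ^ r) := by
                exact mul_le_mul_right (mul_le_mul_left h6 _) _
            _ = ε ^ γ * (4 * H (a + t)) := by rw [hH]; ring
      _ = ε ^ γ * (4 * ∫⁻ t in Set.Ioi a, H (a + t)) := by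
          have hKmeas : Measurable fun t : ℝ => H (a + t) :=
            hHmeas.comp (measurable_const_add a)
          rw [lintegral_const_mul _ (hKmeas.const_mul 4), lintegral_const_mul _ hKmeas]
      _ = ε ^ γ * (4 * ∫⁻ u in Set.Ioi (a + a), H u) := by rw [htrans H]
      _ ≤ ε ^ γ * (4 * 1) := by
          apply mul_le_mul_right
          exact mul_le_mul_right hHint _
      _ = ε ^ γ * 4 := by rw [mul_one]
  -- Combine
  rw [hnorm]
  apply ENNReal.rpow_le_rpow _ (inv_nonneg.mpr hσ.le)
  rw [e1]
  have hεexp : ε ^ (σ / r) ≤ ε ^ γ :=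
    ENNReal.rpow_le_rpow_of_exponent_ge hε1 (by rw [hγ1]; linarith)
  calc (∫⁻ t in Set.Ioc (0:ℝ) 1, (ENNReal.ofReal (t ^ (-σ⁻¹) * ellA B t) * G t) ^ σ) +
      ((∫⁻ t in Set.Ioc (1:ℝ) a, (ENNReal.ofReal (t ^ (-σ⁻¹) * ellA B t) * G t) ^ σ) +
        ∫⁻ t in Set.Ioi a, (ENNReal.ofReal (t ^ (-σ⁻¹) * ellA B t) * G t) ^ σ)
      ≤ ε ^ (σ / r) * M + (ε ^ γ + ε ^ γ * 4) :=
        add_le_add hb1 (add_le_add hb2 hb3)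
    _ ≤ ε ^ γ * M + (ε ^ γ + ε ^ γ * 4) :=
        add_le_add_left (mul_le_mul_left hεexp M) _
    _ = (M + 5) * ε ^ γ := by ring

lemma tail_bound_inf {q : ℝ≥0∞} {A B : ℝ × ℝ} (hr : 0 < q.toReal) (hqt : q ≠ ∞)
    (hA2 : A.2 = -q.toReal⁻¹) (hB1 : B.1 ≤ 0) (hB2 : B.2 = 0)
    {f : ℝ → ℝ≥0∞} (hf : lzNorm ∞ q A f ≤ 1) {a : ℝ}
    (hLa : 1 ≤ Real.log (1 + Real.log a)) (ha : 16 ≤ a) :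
    lzNorm ∞ ∞ B ((Set.Ioi a).indicator fun t => rearr μI f t) ≤
      ((ENNReal.ofReal (Real.log (1 + Real.log a)))⁻¹) ^ q.toReal⁻¹ := by
  set r := q.toReal with hrdef
  set ε := (ENNReal.ofReal (Real.log (1 + Real.log a)))⁻¹ with hε
  have hagt1 : (1:ℝ) < a := by linarith
  have hFa : rearr μI f a ^ r ≤ ε :=
    ENNReal.le_inv_iff_mul_le.mpr (key_bound hr hqt hA2 hf hagt1)
  have hFa' : rearr μI f a ≤ ε ^ r⁻¹ := by
    have h1 := ENNReal.rpow_le_rpow hFa (inv_nonneg.mpr hr.le)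
    rwa [← ENNReal.rpow_mul, mul_inv_cancel₀ hr.ne', ENNReal.rpow_one] at h1
  rw [lzNorm, lqNorm, if_pos rfl]
  refine essSup_le_of_ae_le _ ?_
  have : ∀ᵐ t ∂(volume : Measure ℝ), t ∈ Set.Ioi (0:ℝ) →
      ENNReal.ofReal (t ^ ((⊤:ℝ≥0∞).toReal⁻¹ - (⊤:ℝ≥0∞).toReal⁻¹) * ellA B t) *
        rearr μI ((Set.Ioi a).indicator fun u => rearr μI f u) t ≤ ε ^ r⁻¹ := by
    apply MeasureTheory.ae_of_all
    intro t ht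
    simp only [Set.mem_Ioi] at ht
    have hw : ENNReal.ofReal (t ^ ((⊤:ℝ≥0∞).toReal⁻¹ - (⊤:ℝ≥0∞).toReal⁻¹) * ellA B t) ≤ 1 := by
      simp only [ENNReal.toReal_top, inv_zero, sub_zero, Real.rpow_zero, one_mul]
      rw [show (1:ℝ≥0∞) = ENNReal.ofReal 1 by norm_num]
      apply ENNReal.ofReal_le_ofReal
      rcases le_or_gt t 1 with h1 | h1
      · rw [ellA_le_one ht h1]
        apply Real.rpow_le_one_of_one_le_of_nonpos _ hB1
        linarith [Real.log_nonpos ht.le h1]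
      · rw [ellA_gt_one h1, hB2, Real.rpow_zero]
    have hG : rearr μI ((Set.Ioi a).indicator fun u => rearr μI f u) t ≤ rearr μI f a :=
      (rearr_indicator_le f a t).trans (rearr_antitone f (by linarith : a ≤ a + t))
    calc ENNReal.ofReal (t ^ ((⊤:ℝ≥0∞).toReal⁻¹ - (⊤:ℝ≥0∞).toReal⁻¹) * ellA B t) *
        rearr μI ((Set.Ioi a).indicator fun u => rearr μI f u) t
        ≤ 1 * (ε ^ r⁻¹) := mul_le_mul' hw (hG.trans hFa')
      _ = ε ^ r⁻¹ := one_mul _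
  exact (MeasureTheory.ae_restrict_iff' measurableSet_Ioi).mpr this

lemma hL16 {a : ℝ} (ha : 16 ≤ a) : 1 ≤ Real.log (1 + Real.log a) := by
  have he := Real.exp_one_lt_d9
  have h2 : (2:ℝ) ≤ Real.log a := by
    rw [Real.le_log_iff_exp_le (by linarith : (0:ℝ) < a)]
    have : Real.exp 2 = Real.exp 1 * Real.exp 1 := by
      rw [← Real.exp_add]; norm_num
    nlinarith [Real.exp_pos 1]
  rw [Real.le_log_iff_exp_le (by linarith : (0:ℝ) < 1 + Real.log a)]
  linarith

lemma eps_tendsto : Tendsto (fun a : ℝ => (ENNReal.ofReal (Real.log (1 + Real.log a)))⁻¹)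
    atTop (nhds 0) := by
  have h1 : Tendsto (fun a : ℝ => Real.log (1 + Real.log a)) atTop atTop :=
    Real.tendsto_log_atTop.comp (tendsto_atTop_add_const_left _ 1 Real.tendsto_log_atTop)
  have h2 := ENNReal.tendsto_ofReal_atTop.comp h1
  have h3 := ENNReal.tendsto_inv_iff.mpr h2
  rw [ENNReal.inv_top] at h3
  exact h3


/-- for `p = r = ∞`, `q < s` and `α_∞ + 1/q = β_∞ + 1/s = 0`, the tails
are uniformly small. -/
theorem lz_tail_vanishes_limiting (q s : ℝ≥0∞) (A B : ℝ × ℝ)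
    (hA : LZAdmissible ∞ q A) (hB : LZAdmissible ∞ s B) (hqs : q < s)
    (hAq : A.2 + q.toReal⁻¹ = 0) (hBs : B.2 + s.toReal⁻¹ = 0) :
    Tendsto (fun a : ℝ =>
        ⨆ (f : ℝ → ℝ≥0∞) (_ : Measurable f) (_ : lzNorm ∞ q A f ≤ 1),
          lzNorm ∞ s B ((Set.Ioi a).indicator fun t => rearr μI f t))
      atTop (nhds 0) := by
  have hqt : q ≠ ∞ := (hqs.trans_le le_top).ne
  have hq1 : 1 ≤ q := by
    rcases hA with ⟨h, _⟩ | ⟨_, h, _⟩ | ⟨_, h, _⟩ | ⟨_, h, _⟩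
    · exact absurd h (by simp)
    · exact absurd h (lt_irrefl _)
    · exact h
    · exact absurd h hqt
  have hr : 0 < q.toReal := by
    have h1 : (1:ℝ≥0∞).toReal ≤ q.toReal := ENNReal.toReal_mono hqt hq1
    simp only [ENNReal.toReal_one] at h1
    linarith
  have hA2 : A.2 = -q.toReal⁻¹ := by linarith
  rcases eq_or_ne s ∞ with hs | hs
  · -- s = ∞
    have hB1 : B.1 ≤ 0 := by
      rcases hB with ⟨h, _⟩ | ⟨_, h, _⟩ | ⟨_, _, h, _⟩ | ⟨_, _, h⟩
      · exact absurd h (by simp)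
      · exact absurd h (lt_irrefl _)
      · rw [hs] at h; exact absurd h (lt_irrefl _)
      · exact h
    have hB2 : B.2 = 0 := by
      rw [hs] at hBs; simpa using hBs
    subst hs
    have hΦ : Tendsto (fun a : ℝ =>
        ((ENNReal.ofReal (Real.log (1 + Real.log a)))⁻¹) ^ q.toReal⁻¹) atTop (nhds 0) := by
      have h1 := (ENNReal.continuous_rpow_const (y := q.toReal⁻¹)).tendsto 0
      have h2 := h1.comp eps_tendsto
      rwa [ENNReal.zero_rpow_of_pos (inv_pos.mpr hr)] at h2
    apply tendsto_of_tendsto_of_tendsto_of_le_of_le' tendsto_const_nhds hΦ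
    · exact Filter.Eventually.of_forall fun a => zero_le
    · filter_upwards [eventually_ge_atTop (16:ℝ)] with a ha
      apply iSup_le fun f => iSup_le fun _ => iSup_le fun hf => ?_
      exact tail_bound_inf hr hqt hA2 hB1 hB2 hf (hL16 ha) ha
  · -- s < ∞
    have hBadm : 1 ≤ s ∧ s < ∞ ∧ B.1 + s.toReal⁻¹ < 0 := by
      rcases hB with ⟨h, _⟩ | ⟨_, h, _⟩ | ⟨_, h⟩ | ⟨_, h, _⟩
      · exact absurd h (by simp)
      · exact absurd h (lt_irrefl _)
      · exact h
      · exact absurd h hs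
    have hσ : 0 < s.toReal := by
      have h1 : (1:ℝ≥0∞).toReal ≤ s.toReal := ENNReal.toReal_mono hs hBadm.1
      simp only [ENNReal.toReal_one] at h1
      linarith
    have hrs : q.toReal < s.toReal := (ENNReal.toReal_lt_toReal hqt hs).mpr hqs
    have hB2 : B.2 = -s.toReal⁻¹ := by linarith
    have hB1 : s.toReal * B.1 < -1 := by
      have h1 := mul_lt_mul_of_pos_left (show B.1 < -s.toReal⁻¹ by linarith [hBadm.2.2]) hσ
      have h2 : s.toReal * s.toReal⁻¹ = 1 := mul_inv_cancel₀ hσ.ne'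
      nlinarith
    set M := ENNReal.ofReal (-(s.toReal * B.1 + 1))⁻¹ with hM
    set γ := (s.toReal - q.toReal) / q.toReal with hγ
    have hγpos : 0 < γ := div_pos (by linarith) hr
    have hMT : M + 5 ≠ ∞ := by
      rw [hM]
      exact ENNReal.add_ne_top.mpr ⟨ENNReal.ofReal_ne_top, by norm_num⟩
    have hΦ : Tendsto (fun a : ℝ =>
        ((M + 5) * ((ENNReal.ofReal (Real.log (1 + Real.log a)))⁻¹ ^ γ)) ^ s.toReal⁻¹)
        atTop (nhds 0) := by
      have h1 := ((ENNReal.continuous_rpow_const (y := γ)).tendsto 0).comp eps_tendsto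
      rw [ENNReal.zero_rpow_of_pos hγpos] at h1
      have h2 := ENNReal.Tendsto.const_mul (a := M + 5) h1 (Or.inr hMT)
      rw [mul_zero] at h2
      have h3 := ((ENNReal.continuous_rpow_const (y := s.toReal⁻¹)).tendsto 0).comp h2
      rwa [ENNReal.zero_rpow_of_pos (inv_pos.mpr hσ)] at h3
    apply tendsto_of_tendsto_of_tendsto_of_le_of_le' tendsto_const_nhds hΦ
    · exact Filter.Eventually.of_forall fun a => zero_le
    · filter_upwards [eventually_ge_atTop (16:ℝ)] with a ha
      apply iSup_le fun f => iSup_le fun _ => iSup_le fun hf => ?_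
      exact tail_bound hr hqt hs hrs hA2 hB2 hB1 hf (hL16 ha) ha

end
end

section
/- Let q ∈ [1,∞) and A = (α₀, α_∞) ∈ ℝ² with qα_∞ = −1 and qα₀ < −1. Then there is a constant C > 0 such that for every measurable function f on (0,∞) and every t ≥ 1: ℓℓ(t) · f^*(t)^q ≤ C ∫_0^∞ s^{−1} ℓ^{A}(s)^{q} f^*(s)^q ds, i.e. ℓℓ(t) f^*(t)^q ≤ C ‖f‖_{L^{∞,q,A}(0,∞)}^q. -/
open MeasureTheory Set Filter Topology
open scoped ENNReal NNReal

noncomputable section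

/-- `ℓℓ(t) = 1 + log ℓ(t)`. -/
def elll (t : ℝ) : ℝ := 1 + Real.log (ell t)

lemma rearr_anti {α : Type*} [MeasurableSpace α] (μ : Measure α) (f : α → ℝ≥0∞) :
    Antitone (rearr μ f) := fun s u hsu =>
  sInf_le_sInf (fun l hl => le_trans hl (ENNReal.ofReal_le_ofReal hsu))

lemma integral_loglog (t : ℝ) (ht : 1 < t) :
    ∫⁻ s in Set.Ioo (1:ℝ) t, ENNReal.ofReal (s⁻¹ * (1 + Real.log s)⁻¹) =
      ENNReal.ofReal (Real.log (1 + Real.log t)) := by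
  have hpos : ∀ x ∈ Set.Icc (1:ℝ) t, 0 < x ∧ (0:ℝ) < 1 + Real.log x := by
    intro x hx
    have hx0 : (0:ℝ) < x := lt_of_lt_of_le one_pos hx.1
    have : 0 ≤ Real.log x := Real.log_nonneg hx.1
    exact ⟨hx0, by linarith⟩
  have hcont : ContinuousOn (fun s : ℝ => s⁻¹ * (1 + Real.log s)⁻¹) (Set.Icc 1 t) := by
    intro x hx
    obtain ⟨hx0, hxl⟩ := hpos x hx
    exact (((continuousAt_inv₀ hx0.ne').mul
      ((continuousAt_const.add (Real.continuousAt_log hx0.ne')).inv₀ hxl.ne')).continuousWithinAt)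
  have hderiv : ∀ x ∈ Set.uIcc (1:ℝ) t,
      HasDerivAt (fun s : ℝ => Real.log (1 + Real.log s)) (x⁻¹ * (1 + Real.log x)⁻¹) x := by
    intro x hx
    rw [Set.uIcc_of_le ht.le] at hx
    obtain ⟨hx0, hxl⟩ := hpos x hx
    have hinner : HasDerivAt (fun s : ℝ => 1 + Real.log s) x⁻¹ x :=
      (Real.hasDerivAt_log hx0.ne').const_add 1
    have := (Real.hasDerivAt_log hxl.ne').comp x hinner
    rw [mul_comm]; exact this
  have hint : IntervalIntegrable (fun s : ℝ => s⁻¹ * (1 + Real.log s)⁻¹) volume 1 t := by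
    apply ContinuousOn.intervalIntegrable
    rwa [Set.uIcc_of_le ht.le]
  have hfc := intervalIntegral.integral_eq_sub_of_hasDerivAt hderiv hint
  simp only [Real.log_one, add_zero, Real.log_one] at hfc
  -- hfc : ∫ s in 1..t, s⁻¹*(1+log s)⁻¹ = log (1 + log t) - log (1 + 0) = log(1+log t)
  have hIoo : IntegrableOn (fun s : ℝ => s⁻¹ * (1 + Real.log s)⁻¹) (Set.Ioo 1 t) volume :=
    (hcont.integrableOn_Icc).mono_set Set.Ioo_subset_Icc_self
  have hnonneg : 0 ≤ᵐ[volume.restrict (Set.Ioo 1 t)]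
      (fun s : ℝ => s⁻¹ * (1 + Real.log s)⁻¹) := by
    rw [EventuallyLE, ae_restrict_iff' measurableSet_Ioo]
    filter_upwards with s hs
    obtain ⟨hx0, hxl⟩ := hpos s ⟨hs.1.le, hs.2.le⟩
    positivity
  rw [← MeasureTheory.ofReal_integral_eq_lintegral_ofReal hIoo hnonneg]
  congr 1
  rw [← MeasureTheory.integral_Ioc_eq_integral_Ioo, ← intervalIntegral.integral_of_le ht.le, hfc]
  norm_num

/-- if `qα_∞ = -1` and `qα₀ < -1`, then
`ℓℓ(t) f^*(t)^q ≲ ‖f‖_{L^{∞,q,A}(0,∞)}^q` for `t ≥ 1`. -/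
theorem pointwise_bound_limiting_lz (q : ℝ) (hq : 1 ≤ q) (A : ℝ × ℝ)
    (hA2 : q * A.2 = -1) (hA1 : q * A.1 < -1) :
    ∃ C : ℝ, 0 < C ∧ ∀ f : ℝ → ℝ≥0∞, Measurable f → ∀ t : ℝ, 1 ≤ t →
      ENNReal.ofReal (elll t) * rearr μI f t ^ q ≤
        ENNReal.ofReal C *
          ∫⁻ s in Set.Ioi (0 : ℝ), ENNReal.ofReal (s⁻¹ * ellA A s ^ q) * rearr μI f s ^ q := by
  have hq0 : (0:ℝ) < q := lt_of_lt_of_le one_pos hq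
  set c : ℝ := (2:ℝ) ^ (A.1 * q) with hc
  have hcpos : 0 < c := Real.rpow_pos_of_pos two_pos _
  refine ⟨2 / c + 1, by positivity, ?_⟩
  intro f hf t ht
  set R := rearr μI f t ^ q with hR
  set I := ∫⁻ s in Set.Ioi (0:ℝ), ENNReal.ofReal (s⁻¹ * ellA A s ^ q) * rearr μI f s ^ q with hI
  have hAq : A.1 * q ≤ 0 := by nlinarith
  -- Step (a): ofReal (c/2) * R ≤ I
  have stepa : ENNReal.ofReal (c / 2) * R ≤ I := by
    have hsub : ∫⁻ s in Set.Ioo (1/2 : ℝ) 1,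
        ENNReal.ofReal (s⁻¹ * ellA A s ^ q) * rearr μI f s ^ q ≤ I := by
      apply lintegral_mono_set
      intro x hx
      exact lt_trans (by norm_num) hx.1
    refine le_trans ?_ hsub
    have hpt : ∀ s ∈ Set.Ioo (1/2 : ℝ) 1,
        ENNReal.ofReal c * R ≤ ENNReal.ofReal (s⁻¹ * ellA A s ^ q) * rearr μI f s ^ q := by
      intro s hs
      have hs0 : (0:ℝ) < s := lt_trans (by norm_num) hs.1
      apply mul_le_mul'
      · apply ENNReal.ofReal_le_ofReal
        have hell1 : (1:ℝ) ≤ ell s := by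
          have := abs_nonneg (Real.log s); simp only [ell]; linarith
        have hell2 : ell s ≤ 2 := by
          have h1 : |Real.log s| = -Real.log s := abs_of_nonpos (Real.log_nonpos hs0.le hs.2.le)
          have h2 : -Real.log s ≤ Real.log 2 := by
            rw [← Real.log_inv]
            apply Real.log_le_log (by positivity)
            rw [inv_le_comm₀ hs0 (by norm_num)]
            linarith [hs.1]
          have h3 : Real.log 2 ≤ 1 := by
            rw [show (1:ℝ) = Real.log (Real.exp 1) by simp]
            exact Real.log_le_log (by norm_num) (by
              have := Real.add_one_le_exp (1:ℝ); linarith)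
          simp only [ell]; rw [h1]; linarith
        have hellA : ellA A s = ell s ^ A.1 := by simp [ellA, hs.2.le]
        have : ellA A s ^ q = ell s ^ (A.1 * q) := by
          rw [hellA, ← Real.rpow_mul (by linarith)]
        rw [this]
        calc c = 2 ^ (A.1 * q) := rfl
          _ ≤ ell s ^ (A.1 * q) :=
            Real.rpow_le_rpow_of_nonpos (by linarith) hell2 hAq
          _ ≤ s⁻¹ * ell s ^ (A.1 * q) := by
            apply le_mul_of_one_le_left (by positivity)
            exact one_le_inv_iff₀.2 ⟨hs0, hs.2.le⟩
      · exact ENNReal.rpow_le_rpow (rearr_anti μI f (le_trans hs.2.le ht)) hq0.le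
    calc ENNReal.ofReal (c/2) * R
        = ENNReal.ofReal c * R * ENNReal.ofReal (1/2) := by
          rw [mul_right_comm, ← ENNReal.ofReal_mul hcpos.le, show c * (1/2) = c/2 by ring]
      _ = ∫⁻ _ in Set.Ioo (1/2 : ℝ) 1, ENNReal.ofReal c * R := by
          rw [setLIntegral_const, Real.volume_Ioo]
          norm_num
      _ ≤ _ := by
          apply lintegral_mono_ae
          rw [ae_restrict_iff' measurableSet_Ioo]
          exact ae_of_all _ hpt
  -- Step (b): ofReal (log (1 + log t)) * R ≤ I
  have stepb : ENNReal.ofReal (Real.log (1 + Real.log t)) * R ≤ I := by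
    rcases eq_or_lt_of_le ht with heq | hlt
    · simp [← heq]
    · have hsub : ∫⁻ s in Set.Ioo (1:ℝ) t,
          ENNReal.ofReal (s⁻¹ * ellA A s ^ q) * rearr μI f s ^ q ≤ I := by
        apply lintegral_mono_set
        intro x hx
        exact lt_trans one_pos hx.1
      refine le_trans ?_ hsub
      have hpt : ∀ s ∈ Set.Ioo (1:ℝ) t,
          ENNReal.ofReal (s⁻¹ * (1 + Real.log s)⁻¹) * R ≤
            ENNReal.ofReal (s⁻¹ * ellA A s ^ q) * rearr μI f s ^ q := by
        intro s hs
        have hs1 : (1:ℝ) < s := hs.1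
        have hls : 0 < Real.log s := Real.log_pos hs1
        have hellA : ellA A s ^ q = (1 + Real.log s)⁻¹ := by
          have h1 : ellA A s = ell s ^ A.2 := by simp [ellA, not_le.2 hs1]
          have h2 : ell s = 1 + Real.log s := by
            simp [ell, abs_of_nonneg hls.le]
          rw [h1, h2, ← Real.rpow_mul (by linarith), mul_comm A.2 q, hA2,
            Real.rpow_neg_one]
        rw [hellA]
        exact mul_le_mul' le_rfl
          (ENNReal.rpow_le_rpow (rearr_anti μI f hs.2.le) hq0.le)
      calc ENNReal.ofReal (Real.log (1 + Real.log t)) * R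
          = (∫⁻ s in Set.Ioo (1:ℝ) t, ENNReal.ofReal (s⁻¹ * (1 + Real.log s)⁻¹)) * R := by
            rw [integral_loglog t hlt]
        _ = ∫⁻ s in Set.Ioo (1:ℝ) t, ENNReal.ofReal (s⁻¹ * (1 + Real.log s)⁻¹) * R := by
            rw [lintegral_mul_const]
            apply Measurable.ennreal_ofReal
            exact (measurable_inv.mul ((measurable_const.add Real.measurable_log).inv))
        _ ≤ _ := by
            apply lintegral_mono_ae
            rw [ae_restrict_iff' measurableSet_Ioo]
            exact ae_of_all _ hpt
  -- from stepa: R ≤ ofReal (2/c) * I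
  have hRbound : R ≤ ENNReal.ofReal (2 / c) * I := by
    have ha : ENNReal.ofReal (c/2) ≠ 0 := by
      simp [ENNReal.ofReal_eq_zero, not_le]; positivity
    have ha' : ENNReal.ofReal (c/2) ≠ ∞ := ENNReal.ofReal_ne_top
    have h2c : ENNReal.ofReal (2 / c) = (ENNReal.ofReal (c/2))⁻¹ := by
      rw [show (2:ℝ)/c = (c/2)⁻¹ by rw [inv_div], ENNReal.ofReal_inv_of_pos (by positivity)]
    rw [h2c]
    calc R = (ENNReal.ofReal (c/2))⁻¹ * (ENNReal.ofReal (c/2) * R) := by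
          rw [← mul_assoc, ENNReal.inv_mul_cancel ha ha', one_mul]
      _ ≤ (ENNReal.ofReal (c/2))⁻¹ * I := mul_le_mul' le_rfl stepa
  -- Combine
  have helll : elll t = 1 + Real.log (1 + Real.log t) := by
    have hlt : 0 ≤ Real.log t := Real.log_nonneg ht
    simp [elll, ell, abs_of_nonneg hlt]
  have hLnn : 0 ≤ Real.log (1 + Real.log t) :=
    Real.log_nonneg (by have := Real.log_nonneg ht; linarith)
  calc ENNReal.ofReal (elll t) * R
      = (1 + ENNReal.ofReal (Real.log (1 + Real.log t))) * R := by
        rw [helll, ENNReal.ofReal_add zero_le_one hLnn, ENNReal.ofReal_one]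
    _ = R + ENNReal.ofReal (Real.log (1 + Real.log t)) * R := by
        rw [add_mul, one_mul]
    _ ≤ ENNReal.ofReal (2/c) * I + I := add_le_add hRbound stepb
    _ = ENNReal.ofReal (2/c + 1) * I := by
        rw [ENNReal.ofReal_add (by positivity) zero_le_one, ENNReal.ofReal_one,
          add_mul, one_mul]
  done

end
end
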